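/- Let (β_k) ⊆ (0,1) with ∑ β_k = ∞, and let (e_k) be absolutely summable. Then ∑_{l=0}^{k-1} |e_l| ∏_{m=l+1}^{k-1} (1-β_m) → 0 as k → ∞. -/

import Mathlib

open Finset Filter

theorem convolution_vanishing
    (β : ℕ → ℝ) (hβ : ∀ k, 0 < β k ∧ β k < 1)
    (hβdiv : Tendsto (fun n => ∑ k ∈ range n, β k) atTop atTop)
    (e : ℕ → ℝ) (he : Summable fun k => |e k|) :
    Tendsto (fun k => ∑ l ∈ range k, |e l| * ∏ m ∈ Ico (l + 1) k, (1 - β m))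
      atTop (nhds 0) := by
  have hpn : ∀ a b : ℕ, (0:ℝ) ≤ ∏ m ∈ Ico a b, (1 - β m) :=
    fun a b => Finset.prod_nonneg fun m _ => by linarith [(hβ m).2]
  have hp1 : ∀ a b : ℕ, ∏ m ∈ Ico a b, (1 - β m) ≤ 1 :=
    fun a b => Finset.prod_le_one (fun m _ => by linarith [(hβ m).2])
      (fun m _ => by linarith [(hβ m).1])
  have hfnn : ∀ k, 0 ≤ ∑ l ∈ range k, |e l| * ∏ m ∈ Ico (l + 1) k, (1 - β m) :=
    fun k => Finset.sum_nonneg fun l _ => mul_nonneg (abs_nonneg _) (hpn _ _)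
  rw [Metric.tendsto_atTop]
  intro ε hε
  -- choose N with tail small
  have htail : Tendsto (fun n => ∑' i, |e (i + n)|) atTop (nhds 0) :=
    tendsto_sum_nat_add (fun k => |e k|)
  obtain ⟨N, hN⟩ := (Metric.tendsto_atTop.1 htail (ε/2) (by linarith)).imp
    (fun N h => h N le_rfl)
  rw [Real.dist_eq, sub_zero] at hN
  have hNsum : ∑' i, |e (i + N)| < ε / 2 := lt_of_abs_lt hN
  have hsummN : Summable fun i => |e (i + N)| := (summable_nat_add_iff N).2 he
  set C := ∑ l ∈ range N, |e l| with hC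
  have hCnn : 0 ≤ C := Finset.sum_nonneg fun l _ => abs_nonneg _
  -- exp part tends to 0
  have hexp : Tendsto (fun k => C * Real.exp ((∑ m ∈ range N, β m) - ∑ m ∈ range k, β m))
      atTop (nhds 0) := by
    have h1 : Tendsto (fun k => (∑ m ∈ range N, β m) - ∑ m ∈ range k, β m) atTop atBot :=
      tendsto_atBot_add_const_left _ _ (tendsto_neg_atBot_iff.2 hβdiv)
    have h2 := Real.tendsto_exp_atBot.comp h1
    simpa using h2.const_mul C
  obtain ⟨M, hM⟩ := Metric.tendsto_atTop.1 hexp (ε/2) (by linarith)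
  refine ⟨max N M, fun k hk => ?_⟩
  have hkN : N ≤ k := le_trans (le_max_left _ _) hk
  have hkM : M ≤ k := le_trans (le_max_right _ _) hk
  rw [Real.dist_eq, sub_zero, abs_of_nonneg (hfnn k)]
  -- split the sum
  have hsplit : ∑ l ∈ range k, |e l| * ∏ m ∈ Ico (l + 1) k, (1 - β m)
      = (∑ l ∈ range N, |e l| * ∏ m ∈ Ico (l + 1) k, (1 - β m))
        + ∑ l ∈ Ico N k, |e l| * ∏ m ∈ Ico (l + 1) k, (1 - β m) := by
    rw [Finset.range_eq_Ico, ← Finset.sum_Ico_consecutive _ (Nat.zero_le N) hkN,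
      ← Finset.range_eq_Ico]
  rw [hsplit]
  -- tail bound
  have htb : ∑ l ∈ Ico N k, |e l| * ∏ m ∈ Ico (l + 1) k, (1 - β m) < ε / 2 := by
    have h1 : ∑ l ∈ Ico N k, |e l| * ∏ m ∈ Ico (l + 1) k, (1 - β m)
        ≤ ∑ l ∈ Ico N k, |e l| :=
      Finset.sum_le_sum fun l _ => by
        have := mul_le_of_le_one_right (abs_nonneg (e l)) (hp1 (l+1) k)
        linarith
    have h2 : ∑ l ∈ Ico N k, |e l| = ∑ i ∈ range (k - N), |e (i + N)| := by
      rw [Finset.sum_Ico_eq_sum_range]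
      exact Finset.sum_congr rfl fun i _ => by rw [add_comm]
    have h3 : ∑ i ∈ range (k - N), |e (i + N)| ≤ ∑' i, |e (i + N)| :=
      Summable.sum_le_tsum _ (fun i _ => abs_nonneg _) hsummN
    calc _ ≤ ∑ i ∈ range (k - N), |e (i + N)| := by rw [← h2]; exact h1
      _ ≤ ∑' i, |e (i + N)| := h3
      _ < ε / 2 := hNsum
  -- head bound
  have hhb : ∑ l ∈ range N, |e l| * ∏ m ∈ Ico (l + 1) k, (1 - β m)
      ≤ C * Real.exp ((∑ m ∈ range N, β m) - ∑ m ∈ range k, β m) := by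
    have hPexp : ∏ m ∈ Ico N k, (1 - β m)
        ≤ Real.exp ((∑ m ∈ range N, β m) - ∑ m ∈ range k, β m) := by
      have hs : (∑ m ∈ range N, β m) - ∑ m ∈ range k, β m = ∑ m ∈ Ico N k, (-β m) := by
        rw [Finset.sum_neg_distrib, Finset.sum_Ico_eq_sub _ hkN]
        ring
      rw [hs, Real.exp_sum]
      exact Finset.prod_le_prod (fun m _ => by linarith [(hβ m).2])
        (fun m _ => by linarith [Real.add_one_le_exp (-β m)])
    calc ∑ l ∈ range N, |e l| * ∏ m ∈ Ico (l + 1) k, (1 - β m)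
        ≤ ∑ l ∈ range N, |e l| * ∏ m ∈ Ico N k, (1 - β m) := by
          refine Finset.sum_le_sum fun l hl => ?_
          have hlN : l + 1 ≤ N := Finset.mem_range.1 hl
          have hdecomp : ∏ m ∈ Ico (l + 1) k, (1 - β m)
              = (∏ m ∈ Ico (l + 1) N, (1 - β m)) * ∏ m ∈ Ico N k, (1 - β m) :=
            (Finset.prod_Ico_consecutive _ hlN hkN).symm
          have : ∏ m ∈ Ico (l + 1) k, (1 - β m) ≤ ∏ m ∈ Ico N k, (1 - β m) := by
            rw [hdecomp]
            exact mul_le_of_le_one_left (hpn N k) (hp1 _ _) |>.trans_eq rfl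
          exact mul_le_mul_of_nonneg_left this (abs_nonneg _)
      _ = C * ∏ m ∈ Ico N k, (1 - β m) := by rw [← Finset.sum_mul]
      _ ≤ C * Real.exp ((∑ m ∈ range N, β m) - ∑ m ∈ range k, β m) :=
          mul_le_mul_of_nonneg_left hPexp hCnn
  have hMk := hM k hkM
  rw [Real.dist_eq, sub_zero,
    abs_of_nonneg (mul_nonneg hCnn (Real.exp_pos _).le)] at hMk
  linarith
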